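/- Fix an integer s ≥ 5 and let σ = (4s+3, 2s+1, s+1, s, 1, …, 1) with s trailing entries equal to 1. Then T^σ_{300} = 110s + 80; that is, 110s + 80 is the greatest element of {σ·α : α ∈ ℤ_{≥0}^{s+4}, Σ_j α_j(α_j+1) ≤ 600}. -/

import Mathlib

open Finset

/-- `σ` is a changemaker vector: all entries are positive and every integer `k` with
`0 ≤ k ≤ σ_0 + ⋯ + σ_n` is the sum of a subset of the entries. -/
def IsChangemaker {n : ℕ} (σ : Fin (n + 1) → ℕ) : Prop :=
  (∀ i, 0 < σ i) ∧
    ∀ k : ℕ, k ≤ ∑ i, σ i → ∃ A : Finset (Fin (n + 1)), ∑ i ∈ A, σ i = k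

/-- `Tcm σ m = T^σ_m`, the maximum of `σ·α` over all `α ∈ ℤ_{≥0}^{n+1}` with
`Σ_j α_j (α_j + 1) ≤ 2m` (the maximum exists: the set is nonempty and bounded). -/
noncomputable def Tcm {n : ℕ} (σ : Fin (n + 1) → ℕ) (m : ℕ) : ℕ :=
  sSup {t : ℕ | ∃ α : Fin (n + 1) → ℕ,
    (∑ j, α j * (α j + 1)) ≤ 2 * m ∧ t = ∑ j, σ j * α j}

/-- `Vcm σ i = V^σ_i`, the `i`-th relevant coefficient of `σ`:
the least `m` with `T^σ_m ≥ i` (and `V^σ_0 = 0`). -/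
noncomputable def Vcm {n : ℕ} (σ : Fin (n + 1) → ℕ) (i : ℕ) : ℕ :=
  sInf {m : ℕ | i ≤ Tcm σ m}

lemma cm_consec (x : ℤ) : 0 ≤ x * (x + 1) := by
  rcases le_or_gt 0 x with h | h
  · exact mul_nonneg h (by linarith)
  · have h1 : 0 ≤ (-x) * (-(x + 1)) := mul_nonneg (by omega) (by omega)
    nlinarith [h1]

lemma cm_cert1 (a b c d R : ℤ)
    (hQ : a * (a + 1) + b * (b + 1) + c * (c + 1) + d * (d + 1) + 2 * R ≤ 600)
    (hR : 0 ≤ R) : 4 * a + 2 * b + c + d ≤ 110 := by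
  have h41 : 41 * (4 * a + 2 * b + c + d) ≤ 4550 := by
    nlinarith [sq_nonneg (a - 20), cm_consec (b - 10), sq_nonneg (b - 10),
      cm_consec (c - 5), sq_nonneg (c - 5), cm_consec (d - 5), sq_nonneg (d - 5)]
  omega

lemma cm_cert2 (a b c d R : ℤ)
    (hQ : a * (a + 1) + b * (b + 1) + c * (c + 1) + d * (d + 1) + 2 * R ≤ 600)
    (hR : 0 ≤ R) : 23 * a + 11 * b + 6 * c + 5 * d + R ≤ 630 := by
  have h31 : 31 * (23 * a + 11 * b + 6 * c + 5 * d + R) ≤ 19560 := by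
    nlinarith [cm_consec (a - 21), sq_nonneg (a - 20), cm_consec (b - 10),
      sq_nonneg (b - 10), cm_consec (c - 6), cm_consec (c - 5),
      cm_consec (d - 5), cm_consec (d - 4), sq_nonneg (d - 4), hR]
  omega

lemma cm_split4 {s : ℕ} (f : Fin (s + 3 + 1) → ℕ) :
    ∑ j, f j = f 0 + f (Fin.succ 0) + f (Fin.succ (Fin.succ 0)) +
      f (Fin.succ (Fin.succ (Fin.succ 0))) + ∑ i : Fin s, f i.succ.succ.succ.succ := by
  rw [Fin.sum_univ_succ, Fin.sum_univ_succ, Fin.sum_univ_succ, Fin.sum_univ_succ]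
  ring

lemma cm_sum_ind (s c : ℕ) (h5 : 5 ≤ s) :
    ∑ i : Fin s, (if i.val < 5 then c else 0) = 5 * c := by
  rw [Fin.sum_univ_eq_sum_range (fun i => if i < 5 then c else 0) s]
  rw [← Finset.sum_subset (Finset.range_subset_range.mpr h5)
    (fun x _ hx => by rw [if_neg]; simpa using hx)]
  simp [Finset.sum_range_succ]
  ring

theorem stmt_15 (s : ℕ) (hs : 5 ≤ s) (σ : Fin (s + 3 + 1) → ℕ)
    (hσ : σ = fun j : Fin (s + 3 + 1) => if j.val = 0 then 4 * s + 3
      else if j.val = 1 then 2 * s + 1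
      else if j.val = 2 then s + 1
      else if j.val = 3 then s else 1) :
    Tcm σ 300 = 110 * s + 80 := by
  have hσ0 : σ 0 = 4 * s + 3 := by simp [hσ]
  have hσ1 : σ (Fin.succ 0) = 2 * s + 1 := by simp [hσ, Fin.val_succ]
  have hσ2 : σ (Fin.succ (Fin.succ 0)) = s + 1 := by simp [hσ, Fin.val_succ, Nat.mod_eq_of_lt (show 2 < s + 3 + 1 by omega), Nat.mod_eq_of_lt (show 2 < s + 3 by omega)]; nofun
  have hσ3 : σ (Fin.succ (Fin.succ (Fin.succ 0))) = s := by simp [hσ, Fin.val_succ, Nat.mod_eq_of_lt (show 2 < s + 3 + 1 by omega), Nat.mod_eq_of_lt (show 2 < s + 3 by omega)]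
  have hσ4 : ∀ i : Fin s, σ i.succ.succ.succ.succ = 1 := by
    intro i
    rw [hσ]
    simp only [Fin.val_succ]
    rw [if_neg (by omega), if_neg (by omega), if_neg (by omega), if_neg (by omega)]
  -- upper bound
  have hub : ∀ t ∈ {t : ℕ | ∃ α : Fin (s + 3 + 1) → ℕ,
      (∑ j, α j * (α j + 1)) ≤ 2 * 300 ∧ t = ∑ j, σ j * α j}, t ≤ 110 * s + 80 := by
    rintro t ⟨α, hcost, rfl⟩
    rw [cm_split4] at hcost
    rw [cm_split4 (fun j => σ j * α j)]
    simp only [hσ0, hσ1, hσ2, hσ3]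
    have hones : ∑ i : Fin s, σ i.succ.succ.succ.succ * α i.succ.succ.succ.succ
        = ∑ i : Fin s, α i.succ.succ.succ.succ := by
      refine Finset.sum_congr rfl fun i _ => by rw [hσ4, one_mul]
    rw [hones]
    set a := α 0
    set b := α (Fin.succ 0)
    set c := α (Fin.succ (Fin.succ 0))
    set d := α (Fin.succ (Fin.succ (Fin.succ 0)))
    set R := ∑ i : Fin s, α i.succ.succ.succ.succ with hRdef
    have hRcost : 2 * R ≤ ∑ i : Fin s, α i.succ.succ.succ.succ * (α i.succ.succ.succ.succ + 1) := by
      rw [hRdef, Finset.mul_sum]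
      refine Finset.sum_le_sum fun i _ => ?_
      set x := α i.succ.succ.succ.succ
      rcases Nat.eq_zero_or_pos x with h | h
      · simp [h]
      · calc 2 * x = x * 2 := by ring
          _ ≤ x * (x + 1) := Nat.mul_le_mul_left x (by omega)
    have hQ : a * (a + 1) + b * (b + 1) + c * (c + 1) + d * (d + 1) + 2 * R ≤ 600 := by
      omega
    have hQz : (a : ℤ) * (a + 1) + b * (b + 1) + c * (c + 1) + d * (d + 1) + 2 * R ≤ 600 := by
      exact_mod_cast hQ
    have hRz : (0 : ℤ) ≤ (R : ℤ) := Int.ofNat_nonneg R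
    have h1 := cm_cert1 (a : ℤ) b c d R hQz hRz
    have h2 := cm_cert2 (a : ℤ) b c d R hQz hRz
    have hsz : (5 : ℤ) ≤ (s : ℤ) := by exact_mod_cast hs
    have goal_z : ((4 * s + 3) * a + (2 * s + 1) * b + (s + 1) * c + s * d + R : ℤ)
        ≤ 110 * s + 80 := by
      have hmul : (0 : ℤ) ≤ ((s : ℤ) - 5) * (110 - (4 * a + 2 * b + c + d)) :=
        mul_nonneg (by linarith) (by linarith)
      nlinarith [hmul]
    exact_mod_cast goal_z
  -- membership
  have hmem : 110 * s + 80 ∈ {t : ℕ | ∃ α : Fin (s + 3 + 1) → ℕ,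
      (∑ j, α j * (α j + 1)) ≤ 2 * 300 ∧ t = ∑ j, σ j * α j} := by
    set w : Fin (s + 3 + 1) → ℕ := fun j => if j.val = 0 then 20 else if j.val = 1 then 10
      else if j.val = 2 then 5 else if j.val = 3 then 5
      else if j.val < 9 then 1 else 0 with hw
    have w0 : w 0 = 20 := by simp [hw]
    have w1 : w (Fin.succ 0) = 10 := by simp [hw, Fin.val_succ]
    have w2 : w (Fin.succ (Fin.succ 0)) = 5 := by simp [hw, Fin.val_succ, Nat.mod_eq_of_lt (show 2 < s + 3 + 1 by omega), Nat.mod_eq_of_lt (show 2 < s + 3 by omega)]; nofun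
    have w3 : w (Fin.succ (Fin.succ (Fin.succ 0))) = 5 := by simp [hw, Fin.val_succ, Nat.mod_eq_of_lt (show 2 < s + 3 + 1 by omega), Nat.mod_eq_of_lt (show 2 < s + 3 by omega)]
    have w4 : ∀ i : Fin s, w i.succ.succ.succ.succ = if i.val < 5 then 1 else 0 := by
      intro i
      rw [hw]
      simp only [Fin.val_succ]
      rw [if_neg (by omega), if_neg (by omega), if_neg (by omega), if_neg (by omega)]
      by_cases h : i.val < 5
      · rw [if_pos (by omega), if_pos h]
      · rw [if_neg (by omega), if_neg h]
    refine ⟨w, ?_, ?_⟩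
    · rw [cm_split4 (fun j => w j * (w j + 1))]
      simp only [w0, w1, w2, w3]
      have : ∑ i : Fin s, w i.succ.succ.succ.succ * (w i.succ.succ.succ.succ + 1)
          = ∑ i : Fin s, (if i.val < 5 then 2 else 0) := by
        refine Finset.sum_congr rfl fun i _ => ?_
        rw [w4]
        by_cases h : i.val < 5
        · rw [if_pos h, if_pos h]
        · rw [if_neg h, if_neg h]
      rw [this, cm_sum_ind s 2 hs]
    · rw [cm_split4 (fun j => σ j * w j)]
      simp only [w0, w1, w2, w3, hσ0, hσ1, hσ2, hσ3]
      have : ∑ i : Fin s, σ i.succ.succ.succ.succ * w i.succ.succ.succ.succ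
          = ∑ i : Fin s, (if i.val < 5 then 1 else 0) := by
        refine Finset.sum_congr rfl fun i _ => by rw [hσ4, w4, one_mul]
      rw [this, cm_sum_ind s 1 hs]
      ring
  -- conclude
  rw [Tcm]
  exact le_antisymm (csSup_le ⟨_, hmem⟩ hub) (le_csSup ⟨110 * s + 80, hub⟩ hmem)
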